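/- The divergence ∇: Der(T(V*)) → DR⁰(V) ⊗ DR⁰(V) defined in coordinates by ∇((f₁⋯f_k)∂_{xᵢ}) := Σᵢ (−1)^{|xᵢ|(|fᵢ|+…+|f_k|)} ∂_{xᵢ}(fᵢ)·[(f₁⋯f_{i−1}) ⊗ (f_{i+1}⋯f_k)] is independent of the choice of homogeneous basis (coordinates) of V*. -/

import Mathlib

set_option maxHeartbeats 1000000
set_option synthInstance.maxHeartbeats 400000

noncomputable section

/-!
STATEMENT 7: The divergence ∇ : Der(T(V*)) → DR⁰(V) ⊗ DR⁰(V), defined in coordinates by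
∇((f₁⋯f_k)∂_{xᵢ}) := Σⱼ (−1)^{|xᵢ|(|fⱼ|+…+|f_k|)} ∂_{xᵢ}(fⱼ)·[(f₁⋯f_{j−1}) ⊗ (f_{j+1}⋯f_k)],
is independent of the choice of homogeneous basis (coordinates) of V*.

Here `M` plays the role of V* with parity decomposition given by the submodules `G z`
(with G 0 ∩ G 1 = 0); a choice of coordinates is a homogeneous basis `b` (with parities
`pb`) of `M`, identifying T(V*) = TensorAlgebra ℚ M with the free algebra `FA n` via
`TensorAlgebra.equivFreeAlgebra b`.  A derivation of T(V*) is determined by its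
restriction `u : M → TensorAlgebra ℚ M` to the generators; its divergence in the
coordinates `b` is computed by the coordinate formula (⋆) (the map `divg` below) applied
to the coordinate expression of `u`, and transported back to TensorAlgebra ℚ M.  The
space DR⁰(V) is defined basis-independently as the quotient of T(V*) by the span `CM` of
graded commutators of products of homogeneous generators.  The theorem: for two
homogeneous bases the results agree in DR⁰(V) ⊗ DR⁰(V).
-/


open scoped TensorProduct

/-- The sign (−1)^z for a parity z ∈ ℤ/2. -/
def sgn (z : ZMod 2) : ℚ := (-1 : ℚ) ^ z.val

/-- The free (tensor) algebra T(V*) on homogeneous coordinates x₁,…,xₙ. -/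
abbrev FA (n : ℕ) := FreeAlgebra ℚ (Fin n)

/-- The basis of words (noncommutative monomials) of T(V*). -/
def bas (n : ℕ) : Module.Basis (FreeMonoid (Fin n)) ℚ (FA n) := FreeAlgebra.basisFreeMonoid ℚ (Fin n)

/-- The monomial associated to a word. -/
def mono {n : ℕ} (w : List (Fin n)) : FA n := bas n (FreeMonoid.ofList w)

/-- The parity of a word. -/
def wpar {n : ℕ} (p : Fin n → ZMod 2) (w : List (Fin n)) : ZMod 2 := (w.map p).sum

/-- Extend a function on words to a linear map on T(V*). -/
def mk1 {n : ℕ} {M : Type} [AddCommGroup M] [Module ℚ M] (F : List (Fin n) → M) :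
    FA n →ₗ[ℚ] M :=
  (bas n).constr ℚ (fun w => F (FreeMonoid.toList w))

/-- Extend a function on pairs of words to a bilinear map on T(V*). -/
def mk2 {n : ℕ} {M : Type} [AddCommGroup M] [Module ℚ M] (F : List (Fin n) → List (Fin n) → M) :
    FA n →ₗ[ℚ] FA n →ₗ[ℚ] M :=
  (bas n).constr ℚ (fun w => mk1 (F (FreeMonoid.toList w)))

/-- The parity-z graded piece of T(V*): the span of the words of parity z. -/
def Gpart {n : ℕ} (p : Fin n → ZMod 2) (z : ZMod 2) : Submodule ℚ (FA n) :=
  Submodule.span ℚ {x | ∃ w : List (Fin n), wpar p w = z ∧ x = mono w}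

/-- The submodule of graded commutators [T(V*),T(V*)]; the quotient by it is the space
DR⁰(V) of noncommutative 0-forms (cyclic words). -/
def Csub {n : ℕ} (p : Fin n → ZMod 2) : Submodule ℚ (FA n) :=
  Submodule.span ℚ
    {x | ∃ u v : List (Fin n), x = mono (u ++ v) - sgn (wpar p u * wpar p v) • mono (v ++ u)}

/-- The graded derivation (noncommutative vector field) ξ = Σᵢ gᵢ ∂_{xᵢ} of parity `q`
with generator values `g`, as a linear endomorphism of T(V*):
ξ(l₁⋯l_k) = Σⱼ (−1)^{q(|l₁|+…+|l_{j−1}|)} l₁⋯l_{j−1}·g(lⱼ)·l_{j+1}⋯l_k. -/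
def der {n : ℕ} (p : Fin n → ZMod 2) (q : ZMod 2) (g : Fin n → FA n) : FA n →ₗ[ℚ] FA n :=
  mk1 (fun w => ∑ j : Fin w.length,
    sgn (q * wpar p (w.take j.val)) •
      (mono (w.take j.val) * g (w.get j) * mono (w.drop (j.val + 1))))

/-- The divergence of the noncommutative vector field Σᵢ gᵢ ∂_{xᵢ}, computed on
representatives in T(V*) ⊗ T(V*) by formula (⋆):
∇((f₁⋯f_k)∂_{xᵢ}) = Σⱼ (−1)^{|xᵢ|(|fⱼ|+…+|f_k|)} ∂_{xᵢ}(fⱼ)·[(f₁⋯f_{j−1}) ⊗ (f_{j+1}⋯f_k)]. -/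
def divg {n : ℕ} (p : Fin n → ZMod 2) (g : Fin n → FA n) :
    TensorProduct ℚ (FA n) (FA n) :=
  ∑ i : Fin n,
    (mk1 (fun w => ∑ j : Fin w.length,
      if w.get j = i then
        sgn (p i * wpar p (w.drop j.val)) •
          (mono (w.take j.val) ⊗ₜ[ℚ] mono (w.drop (j.val + 1)))
      else 0)) (g i)

/-- L_ξ ⊗ 1 on T(V*) ⊗ T(V*). -/
def opL {n : ℕ} (p : Fin n → ZMod 2) (q : ZMod 2) (g : Fin n → FA n) :
    TensorProduct ℚ (FA n) (FA n) →ₗ[ℚ] TensorProduct ℚ (FA n) (FA n) :=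
  TensorProduct.lift (mk2 (fun w₁ w₂ => (der p q g (mono w₁)) ⊗ₜ[ℚ] mono w₂))

/-- 1 ⊗ L_ξ on T(V*) ⊗ T(V*), with the Koszul sign (−1)^{|ξ||first factor|}. -/
def opR {n : ℕ} (p : Fin n → ZMod 2) (q : ZMod 2) (g : Fin n → FA n) :
    TensorProduct ℚ (FA n) (FA n) →ₗ[ℚ] TensorProduct ℚ (FA n) (FA n) :=
  TensorProduct.lift (mk2 (fun w₁ w₂ =>
    sgn (q * wpar p w₁) • (mono w₁ ⊗ₜ[ℚ] der p q g (mono w₂))))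

/-- The parity-z part of the tensor algebra on `M`, spanned by products of homogeneous
generators of total parity z (relative to the grading `G` of `M`). -/
def Tpar (M : Type) [AddCommGroup M] [Module ℚ M] (G : ZMod 2 → Submodule ℚ M)
    (z : ZMod 2) : Submodule ℚ (TensorAlgebra ℚ M) :=
  Submodule.span ℚ
    {x | ∃ l : List (M × ZMod 2), (∀ q ∈ l, q.1 ∈ G q.2) ∧ (l.map Prod.snd).sum = z ∧
      x = (l.map (fun q => TensorAlgebra.ι ℚ q.1)).prod}

/-- The span of graded commutators in the tensor algebra on `M`; the quotient by it is
DR⁰(V), defined without reference to a basis. -/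
def CM (M : Type) [AddCommGroup M] [Module ℚ M] (G : ZMod 2 → Submodule ℚ M) :
    Submodule ℚ (TensorAlgebra ℚ M) :=
  Submodule.span ℚ
    {x | ∃ (za zb : ZMod 2) (a b : TensorAlgebra ℚ M),
      a ∈ Tpar M G za ∧ b ∈ Tpar M G zb ∧ x = a * b - sgn (za * zb) • (b * a)}

lemma mono_eq {n} (w : List (Fin n)) :
    mono w = FreeAlgebra.equivMonoidAlgebraFreeMonoid.symm
      (MonoidAlgebra.single (FreeMonoid.ofList w) (1:ℚ)) := by
  simp [mono, bas, FreeAlgebra.basisFreeMonoid]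

lemma mono_append {n} (u v : List (Fin n)) : mono (u ++ v) = mono u * mono v := by
  rw [mono_eq, mono_eq, mono_eq, ← map_mul]
  congr 1
  rw [MonoidAlgebra.single_mul_single, one_mul, FreeMonoid.ofList_append]

lemma mono_nil {n} : mono (n := n) [] = 1 := by
  rw [mono_eq]
  rw [show MonoidAlgebra.single (FreeMonoid.ofList ([] : List (Fin n))) (1:ℚ) = (1 : MonoidAlgebra ℚ (FreeMonoid (Fin n))) from rfl, map_one]

lemma mono_single {n} (i : Fin n) : mono [i] = FreeAlgebra.ι ℚ i := by
  rw [mono_eq]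
  rw [show MonoidAlgebra.single (FreeMonoid.ofList [i]) (1:ℚ) = (MonoidAlgebra.of ℚ (FreeMonoid (Fin n)) (FreeMonoid.of i)) from rfl]
  rw [AlgEquiv.symm_apply_eq]
  simp [FreeAlgebra.equivMonoidAlgebraFreeMonoid]

lemma mono_cons {n} (i : Fin n) (w : List (Fin n)) :
    mono (i :: w) = FreeAlgebra.ι ℚ i * mono w := by
  rw [show (i :: w) = [i] ++ w from rfl, mono_append, mono_single]

lemma sgn_add (a b : ZMod 2) : sgn (a + b) = sgn a * sgn b := by
  have h : ∀ z : ZMod 2, z = 0 ∨ z = 1 := by decide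
  rcases h a with ha | ha <;> rcases h b with hb | hb <;>
    subst ha <;> subst hb <;>
    norm_num [sgn, show ZMod.val ((1:ZMod 2)+1) = 0 from by decide, show ZMod.val (2:ZMod 2) = 0 from by decide, show ZMod.val (1:ZMod 2) = 1 from by decide, show ZMod.val (0:ZMod 2) = 0 from by decide]

lemma wpar_cons {n} (p : Fin n → ZMod 2) (i : Fin n) (w : List (Fin n)) :
    wpar p (i :: w) = p i + wpar p w := by simp [wpar]

lemma wpar_append {n} (p : Fin n → ZMod 2) (u v : List (Fin n)) :
    wpar p (u ++ v) = wpar p u + wpar p v := by simp [wpar]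

lemma bas_eq_mono {n} (w : FreeMonoid (Fin n)) : bas n w = mono (FreeMonoid.toList w) := by
  rw [mono, FreeMonoid.ofList_toList]

lemma mk1_mono {n : ℕ} {M : Type} [AddCommGroup M] [Module ℚ M] (F : List (Fin n) → M)
    (w : List (Fin n)) : mk1 F (mono w) = F w := by
  unfold mk1 mono
  rw [Module.Basis.constr_basis, FreeMonoid.toList_ofList]

noncomputable def ctr {X M' : Type} [AddCommGroup X] [Module ℚ X] [AddCommGroup M'] [Module ℚ M']
    (φ : M' →ₗ[ℚ] ℚ) : (X ⊗[ℚ] M') →ₗ[ℚ] X :=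
  TensorProduct.lift (((LinearMap.lsmul ℚ X).comp φ).flip)

@[simp] lemma ctr_tmul {X M' : Type} [AddCommGroup X] [Module ℚ X] [AddCommGroup M'] [Module ℚ M']
    (φ : M' →ₗ[ℚ] ℚ) (x : X) (m : M') : ctr φ (x ⊗ₜ[ℚ] m) = φ m • x := rfl

lemma ctr_natural {X Y M' : Type} [AddCommGroup X] [Module ℚ X] [AddCommGroup Y] [Module ℚ Y]
    [AddCommGroup M'] [Module ℚ M'] (φ : M' →ₗ[ℚ] ℚ) (A : X →ₗ[ℚ] Y) :
    A ∘ₗ ctr φ = ctr φ ∘ₗ (TensorProduct.map A LinearMap.id) := by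
  apply TensorProduct.ext'
  intro x m
  simp

lemma ctr_sum {X M' : Type} [AddCommGroup X] [Module ℚ X] [AddCommGroup M'] [Module ℚ M']
    {ι : Type} (s : Finset ι) (c : ι → ℚ) (φ : ι → (M' →ₗ[ℚ] ℚ)) (t : X ⊗[ℚ] M') :
    ctr (∑ i ∈ s, c i • φ i) t = ∑ i ∈ s, c i • ctr (φ i) t := by
  induction t using TensorProduct.induction_on with
  | zero => simp
  | tmul x m => simp [Finset.sum_smul, smul_smul]
  | add x y hx hy => simp [hx, hy, Finset.sum_add_distrib]

noncomputable def SFA {n : ℕ} {M : Type} [AddCommGroup M] [Module ℚ M]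
    (p : Fin n → ZMod 2) (v : Fin n → M) :
    FA n →ₗ[ℚ] (FA n ⊗[ℚ] FA n) ⊗[ℚ] M :=
  mk1 (fun w => ∑ j : Fin w.length,
    sgn (p (w.get j) * wpar p (w.drop j.val)) •
      ((mono (w.take j.val) ⊗ₜ[ℚ] mono (w.drop (j.val + 1))) ⊗ₜ[ℚ] v (w.get j)))

lemma coord_basis {n} {M : Type} [AddCommGroup M] [Module ℚ M] (b : Module.Basis (Fin n) ℚ M)
    (i k : Fin n) : b.coord i (b k) = if k = i then 1 else 0 := by
  simp [Module.Basis.coord_apply, Module.Basis.repr_self, Finsupp.single_apply]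

lemma divg_eq {n : ℕ} {M : Type} [AddCommGroup M] [Module ℚ M] (p : Fin n → ZMod 2)
    (b : Module.Basis (Fin n) ℚ M) (g : Fin n → FA n) :
    divg p g = ∑ i, ctr (b.coord i) (SFA p (⇑b) (g i)) := by
  unfold divg
  refine Finset.sum_congr rfl (fun i _ => ?_)
  have key : (mk1 fun w => ∑ j : Fin w.length, if w.get j = i then
        sgn (p i * wpar p (w.drop j.val)) • (mono (w.take j.val) ⊗ₜ[ℚ] mono (w.drop (j.val + 1))) else 0)
      = (ctr (b.coord i)) ∘ₗ SFA p ⇑b := by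
    apply Module.Basis.ext (bas n)
    intro w
    rw [bas_eq_mono]
    rw [mk1_mono, LinearMap.comp_apply, SFA, mk1_mono, map_sum]
    refine Finset.sum_congr rfl (fun j _ => ?_)
    rw [map_smul, ctr_tmul, coord_basis]
    by_cases h : (FreeMonoid.toList w).get j = i
    · rw [if_pos h, if_pos h, h, one_smul]
    · rw [if_neg h, if_neg h, zero_smul, smul_zero]
  rw [key, LinearMap.comp_apply]

lemma trace_indep {n : ℕ} {M X : Type} [AddCommGroup M] [Module ℚ M] [AddCommGroup X] [Module ℚ X]
    (b b' : Module.Basis (Fin n) ℚ M) (L : M →ₗ[ℚ] X ⊗[ℚ] M) :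
    ∑ i, ctr (b.coord i) (L (b i)) = ∑ i, ctr (b'.coord i) (L (b' i)) := by
  have hco : ∀ j, b.coord j = ∑ i, b.repr (b' i) j • b'.coord i := by
    intro j
    apply b'.ext
    intro k
    simp [Module.Basis.coord_apply, Module.Basis.repr_self, Finsupp.single_apply]
  calc ∑ i, ctr (b.coord i) (L (b i))
      = ∑ j, ctr (∑ i, b.repr (b' i) j • b'.coord i) (L (b j)) := by
        refine Finset.sum_congr rfl (fun j _ => by rw [← hco])
    _ = ∑ j, ∑ i, b.repr (b' i) j • ctr (b'.coord i) (L (b j)) := by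
        refine Finset.sum_congr rfl (fun j _ => ctr_sum _ _ _ _)
    _ = ∑ i, ∑ j, b.repr (b' i) j • ctr (b'.coord i) (L (b j)) := Finset.sum_comm
    _ = ∑ i, ctr (b'.coord i) (L (b' i)) := by
        refine Finset.sum_congr rfl (fun i _ => ?_)
        conv_rhs => rw [← b.sum_repr (b' i)]
        rw [map_sum, map_sum]
        refine Finset.sum_congr rfl (fun j _ => ?_)
        rw [map_smul, map_smul]

section TLsec
open TensorProduct
/-- first-factor operator -/
noncomputable def TL {A C N : Type} [AddCommGroup A] [Module ℚ A] [AddCommGroup C] [Module ℚ C]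
    [AddCommGroup N] [Module ℚ N] (f : A →ₗ[ℚ] A) :
    ((A ⊗[ℚ] C) ⊗[ℚ] N) →ₗ[ℚ] ((A ⊗[ℚ] C) ⊗[ℚ] N) :=
  TensorProduct.map (TensorProduct.map f LinearMap.id) LinearMap.id

lemma TL_add {A C N : Type} [AddCommGroup A] [Module ℚ A] [AddCommGroup C] [Module ℚ C]
    [AddCommGroup N] [Module ℚ N] (f g : A →ₗ[ℚ] A) :
    TL (C := C) (N := N) (f + g) = TL f + TL g := by
  unfold TL
  rw [TensorProduct.map_add_left, TensorProduct.map_add_left]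

lemma TL_smul {A C N : Type} [AddCommGroup A] [Module ℚ A] [AddCommGroup C] [Module ℚ C]
    [AddCommGroup N] [Module ℚ N] (c : ℚ) (f : A →ₗ[ℚ] A) :
    TL (C := C) (N := N) (c • f) = c • TL f := by
  unfold TL
  rw [TensorProduct.map_smul_left, TensorProduct.map_smul_left]

lemma TL_zero {A C N : Type} [AddCommGroup A] [Module ℚ A] [AddCommGroup C] [Module ℚ C]
    [AddCommGroup N] [Module ℚ N] :
    TL (A := A) (C := C) (N := N) 0 = 0 := by
  unfold TL
  rw [TensorProduct.map_zero_left, TensorProduct.map_zero_left]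

end TLsec

lemma SFA_cons {n : ℕ} {M : Type} [AddCommGroup M] [Module ℚ M]
    (p : Fin n → ZMod 2) (v : Fin n → M) (i : Fin n) (w : List (Fin n)) :
    SFA p v (mono (i :: w)) =
      sgn (p i * (p i + wpar p w)) • ((1 ⊗ₜ[ℚ] mono w) ⊗ₜ[ℚ] v i)
      + TL (LinearMap.mulLeft ℚ (FreeAlgebra.ι ℚ i)) (SFA p v (mono w)) := by
  rw [SFA, mk1_mono, mk1_mono]
  unfold TL
  refine (Fin.sum_univ_succ (n := w.length) (f := fun j : Fin (w.length + 1) =>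
    sgn (p ((i :: w).get j) * wpar p (List.drop (j.val) (i :: w))) •
      (mono (List.take (j.val) (i :: w)) ⊗ₜ[ℚ] mono (List.drop (j.val + 1) (i :: w))) ⊗ₜ[ℚ]
        v ((i :: w).get j))).trans ?_
  congr 1
  · simp [wpar_cons, mono_nil]
  · rw [map_sum]
    refine Finset.sum_congr rfl (fun j _ => ?_)
    rw [map_smul, TensorProduct.map_tmul, TensorProduct.map_tmul]
    simp [mono_cons, List.take_succ_cons, List.drop_succ_cons, Fin.val_succ]

-- ========== TensorAlgebra side ==========
section Tside
open TensorProduct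

variable {n : ℕ} {M : Type} [AddCommGroup M] [Module ℚ M]

abbrev TA (M : Type) [AddCommGroup M] [Module ℚ M] := TensorAlgebra ℚ M

noncomputable def St (b : Module.Basis (Fin n) ℚ M) (pb : Fin n → ZMod 2) :
    TA M →ₗ[ℚ] (TA M ⊗[ℚ] TA M) ⊗[ℚ] M :=
  (TensorProduct.map (TensorProduct.map (TensorAlgebra.equivFreeAlgebra b).symm.toLinearMap
      (TensorAlgebra.equivFreeAlgebra b).symm.toLinearMap) LinearMap.id)
    ∘ₗ SFA pb ⇑b ∘ₗ (TensorAlgebra.equivFreeAlgebra b).toLinearMap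

def lpar {M : Type} (l : List (M × ZMod 2)) : ZMod 2 := (l.map Prod.snd).sum

noncomputable def pil (l : List (M × ZMod 2)) : TA M :=
  (l.map (fun q => TensorAlgebra.ι ℚ q.1)).prod

lemma pil_nil : pil ([] : List (M × ZMod 2)) = 1 := rfl

lemma pil_cons (q : M × ZMod 2) (l : List (M × ZMod 2)) :
    pil (q :: l) = TensorAlgebra.ι ℚ q.1 * pil l := by simp [pil]

lemma lpar_cons (q : M × ZMod 2) (l : List (M × ZMod 2)) :
    lpar (q :: l) = q.2 + lpar l := by simp [lpar]

noncomputable def Phi (l : List (M × ZMod 2)) : (TA M ⊗[ℚ] TA M) ⊗[ℚ] M :=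
  ∑ j : Fin l.length,
    sgn ((l.get j).2 * lpar (l.drop j.val)) •
      ((pil (l.take j.val) ⊗ₜ[ℚ] pil (l.drop (j.val + 1))) ⊗ₜ[ℚ] (l.get j).1)

set_option synthInstance.maxHeartbeats 800000 in
lemma Phi_nil : Phi ([] : List (M × ZMod 2)) = 0 := by simp [Phi]

lemma Phi_cons (m : M) (z : ZMod 2) (l : List (M × ZMod 2)) :
    Phi ((m, z) :: l) =
      sgn (z * (z + lpar l)) • ((1 ⊗ₜ[ℚ] pil l) ⊗ₜ[ℚ] m)
      + TL (LinearMap.mulLeft ℚ (TensorAlgebra.ι ℚ m)) (Phi l) := by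
  unfold Phi TL
  refine (Fin.sum_univ_succ (n := l.length) (f := fun j : Fin (l.length + 1) =>
    sgn ((((m, z) :: l).get j).2 * lpar (List.drop (j.val) ((m, z) :: l))) •
      ((pil (List.take (j.val) ((m, z) :: l)) ⊗ₜ[ℚ] pil (List.drop (j.val + 1) ((m, z) :: l))) ⊗ₜ[ℚ]
        (((m, z) :: l).get j).1))).trans ?_
  congr 1
  rw [map_sum]
  simp only [List.get_cons_succ, Fin.val_succ, List.take_succ_cons, List.drop_succ_cons,
    map_smul, TensorProduct.map_tmul, LinearMap.id_apply, LinearMap.mulLeft_apply]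
  exact Finset.sum_congr rfl fun j _ => by rw [pil_cons]; simp [List.get_cons_succ]

end Tside

-- ========== parity span machinery ==========
noncomputable def Wz {n : ℕ} (p : Fin n → ZMod 2) (z : ZMod 2) : Submodule ℚ (FA n) :=
  Submodule.span ℚ {x | ∃ w : List (Fin n), wpar p w = z ∧ x = mono w}

lemma Wz_mul {n : ℕ} (p : Fin n → ZMod 2) {z1 z2 : ZMod 2} {x y : FA n}
    (hx : x ∈ Wz p z1) (hy : y ∈ Wz p z2) : x * y ∈ Wz p (z1 + z2) := by
  have h : Wz p z1 * Wz p z2 ≤ Wz p (z1 + z2) := by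
    rw [Wz, Wz, Submodule.span_mul_span]
    refine Submodule.span_le.2 ?_
    rintro t ht
    rw [Set.mem_mul] at ht
    obtain ⟨a, ha, c, hc, rfl⟩ := ht
    obtain ⟨u, hu, rfl⟩ := ha
    obtain ⟨v, hv, rfl⟩ := hc
    exact Submodule.subset_span ⟨u ++ v, by rw [wpar_append, hu, hv], (mono_append u v).symm⟩
  exact h (Submodule.mul_mem_mul hx hy)

lemma zmod2_ne {a b : ZMod 2} (h : a ≠ b) : a = b + 1 := by revert h; revert a b; decide

lemma mem_span_parity {M : Type} [AddCommGroup M] [Module ℚ M] (G : ZMod 2 → Submodule ℚ M)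
    (hdisj : G 0 ⊓ G 1 = ⊥) {n : ℕ} (b : Module.Basis (Fin n) ℚ M) (pb : Fin n → ZMod 2)
    (hb : ∀ i, b i ∈ G (pb i)) (z : ZMod 2) {m : M} (hm : m ∈ G z) :
    m ∈ Submodule.span ℚ {x | ∃ i, pb i = z ∧ x = b i} := by
  classical
  have hrepr := b.sum_repr m
  set m0 := ∑ i ∈ Finset.univ.filter (fun i => pb i = z), b.repr m i • b i with hm0
  set m1 := ∑ i ∈ Finset.univ.filter (fun i => ¬ pb i = z), b.repr m i • b i with hm1
  have hsplit : m0 + m1 = m := by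
    rw [hm0, hm1, Finset.sum_filter_add_sum_filter_not]
    exact hrepr
  have hm0mem : m0 ∈ Submodule.span ℚ {x | ∃ i, pb i = z ∧ x = b i} := by
    refine Submodule.sum_mem _ (fun i hi => ?_)
    refine Submodule.smul_mem _ _ (Submodule.subset_span ⟨i, ?_, rfl⟩)
    exact (Finset.mem_filter.1 hi).2
  have hm0G : m0 ∈ G z := by
    refine Submodule.sum_mem _ (fun i hi => ?_)
    refine Submodule.smul_mem _ _ ?_
    rw [← (Finset.mem_filter.1 hi).2]
    exact hb i
  have hm1G : m1 ∈ G (z + 1) := by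
    refine Submodule.sum_mem _ (fun i hi => ?_)
    refine Submodule.smul_mem _ _ ?_
    rw [← zmod2_ne (Finset.mem_filter.1 hi).2]
    exact hb i
  have hbot : G z ⊓ G (z + 1) = ⊥ := by
    have hz := (by decide : ∀ w : ZMod 2, w = 0 ∨ w = 1) z
    rcases hz with rfl | rfl
    · exact hdisj
    · rw [show (1 : ZMod 2) + 1 = 0 from by decide, inf_comm]
      exact hdisj
  have hm1G' : m1 ∈ G z := by
    have : m1 = m - m0 := by rw [← hsplit]; abel
    rw [this]
    exact Submodule.sub_mem _ hm hm0G
  have : m1 ∈ G z ⊓ G (z + 1) := ⟨hm1G', hm1G⟩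
  rw [hbot, Submodule.mem_bot] at this
  have : m = m0 := by rw [← hsplit, this, add_zero]
  rw [this]
  exact hm0mem

lemma pil_mem_Wz {n : ℕ} {M : Type} [AddCommGroup M] [Module ℚ M]
    (G : ZMod 2 → Submodule ℚ M) (hdisj : G 0 ⊓ G 1 = ⊥)
    (b : Module.Basis (Fin n) ℚ M) (pb : Fin n → ZMod 2) (hb : ∀ i, b i ∈ G (pb i)) :
    ∀ l : List (M × ZMod 2), (∀ q ∈ l, q.1 ∈ G q.2) →
      (TensorAlgebra.equivFreeAlgebra b) (pil l) ∈ Wz pb (lpar l) := by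
  intro l
  induction l with
  | nil =>
      intro _
      rw [pil_nil, map_one]
      exact Submodule.subset_span ⟨[], rfl, mono_nil.symm⟩
  | cons q l ih =>
      intro hl
      rw [pil_cons, map_mul, lpar_cons]
      refine Wz_mul _ ?_ (ih (fun q' hq' => hl q' (List.mem_cons_of_mem _ hq')))
      have hq1 : q.1 ∈ G q.2 := hl q (List.mem_cons_self (a := q) (l := l))
      have hsp := mem_span_parity G hdisj b pb hb q.2 hq1
      set f : M →ₗ[ℚ] FA n :=
        (TensorAlgebra.equivFreeAlgebra b).toLinearMap ∘ₗ TensorAlgebra.ι ℚ with hf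
      have himg : f q.1 ∈ Submodule.map f (Submodule.span ℚ {x | ∃ i, pb i = q.2 ∧ x = b i}) :=
        Submodule.mem_map_of_mem hsp
      rw [Submodule.map_span] at himg
      have hle : Submodule.span ℚ (f '' {x | ∃ i, pb i = q.2 ∧ x = b i}) ≤ Wz pb q.2 := by
        refine Submodule.span_le.2 ?_
        rintro t ⟨x, ⟨i, hi, rfl⟩, rfl⟩
        refine Submodule.subset_span ⟨[i], ?_, ?_⟩
        · simp [wpar, hi]
        · rw [hf]
          simp only [LinearMap.comp_apply, AlgEquiv.toLinearMap_apply,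
            TensorAlgebra.equivFreeAlgebra_ι_apply]
          exact (mono_single i).symm
      exact hle himg

-- ========== commuting lemma ==========
lemma comm3 {A B N : Type} [Ring A] [Algebra ℚ A] [Ring B] [Algebra ℚ B]
    [AddCommGroup N] [Module ℚ N] (E : A ≃ₐ[ℚ] B) (c : A) (y : (A ⊗[ℚ] A) ⊗[ℚ] N) :
    (TensorProduct.map (TensorProduct.map E.toLinearMap E.toLinearMap) LinearMap.id)
      (TL (LinearMap.mulLeft ℚ c) y)
    = TL (LinearMap.mulLeft ℚ (E c))
      ((TensorProduct.map (TensorProduct.map E.toLinearMap E.toLinearMap) LinearMap.id) y) := by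
  induction y using TensorProduct.induction_on with
  | zero => simp
  | tmul x nn =>
      induction x using TensorProduct.induction_on with
      | zero => simp [TL]
      | tmul a a' => simp [TL, map_mul]
      | add x₁ x₂ h1 h2 =>
          rw [TensorProduct.add_tmul]
          rw [map_add, map_add, map_add, map_add]
          rw [h1, h2]
  | add y₁ y₂ h1 h2 => rw [map_add, map_add, map_add, map_add, h1, h2]

lemma mulLeft_add' {A : Type} [Ring A] [Algebra ℚ A] (a b : A) :
    LinearMap.mulLeft ℚ (a + b) = LinearMap.mulLeft ℚ a + LinearMap.mulLeft ℚ b :=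
  LinearMap.ext fun x => add_mul a b x

lemma mulLeft_smul' {A : Type} [Ring A] [Algebra ℚ A] (c : ℚ) (a : A) :
    LinearMap.mulLeft ℚ (c • a) = c • LinearMap.mulLeft ℚ a :=
  LinearMap.ext fun x => smul_mul_assoc c a x

-- ========== main computation ==========
section Main
open TensorProduct
variable {n : ℕ} {M : Type} [AddCommGroup M] [Module ℚ M]

lemma St_pil (G : ZMod 2 → Submodule ℚ M) (hdisj : G 0 ⊓ G 1 = ⊥)
    (b : Module.Basis (Fin n) ℚ M) (pb : Fin n → ZMod 2) (hb : ∀ i, b i ∈ G (pb i)) :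
    ∀ l : List (M × ZMod 2), (∀ q ∈ l, q.1 ∈ G q.2) → St b pb (pil l) = Phi l := by
  intro l
  induction l with
  | nil =>
      intro _
      rw [pil_nil, Phi_nil]
      unfold St
      rw [LinearMap.comp_apply, LinearMap.comp_apply, AlgEquiv.toLinearMap_apply, map_one,
        ← mono_nil, SFA, mk1_mono]
      simp
  | cons q l ih =>
      intro hl
      obtain ⟨m, z⟩ := q
      have hGl : ∀ q' ∈ l, q'.1 ∈ G q'.2 := fun q' hq' => hl q' (List.mem_cons_of_mem _ hq')
      have IH : St b pb (pil l) = Phi l := ih hGl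
      set E := TensorAlgebra.equivFreeAlgebra b with hE
      set Eℓ := E.symm.toLinearMap with hEℓ
      set TM := (TensorProduct.map (TensorProduct.map Eℓ Eℓ)
        (LinearMap.id : M →ₗ[ℚ] M)) with hTM
      -- inner claim, for basis generators
      have inner : ∀ i : Fin n, pb i = z →
          St b pb (TensorAlgebra.ι ℚ (b i) * pil l) =
            sgn (z * (z + lpar l)) • ((1 ⊗ₜ[ℚ] pil l) ⊗ₜ[ℚ] b i)
            + TL (LinearMap.mulLeft ℚ (TensorAlgebra.ι ℚ (b i))) (Phi l) := by
        intro i hiz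
        have hx := pil_mem_Wz G hdisj b pb hb l hGl
        -- predicate Q on x ∈ Wz pb (lpar l)
        have Q : ∀ x ∈ Wz pb (lpar l),
            TM (SFA pb ⇑b (FreeAlgebra.ι ℚ i * x)) =
              sgn (pb i * (pb i + lpar l)) • ((1 ⊗ₜ[ℚ] (E.symm x)) ⊗ₜ[ℚ] b i)
              + TL (LinearMap.mulLeft ℚ (TensorAlgebra.ι ℚ (b i))) (TM (SFA pb ⇑b x)) := by
          intro x hxmem
          refine Submodule.span_induction (p := fun x _ =>
            TM (SFA pb ⇑b (FreeAlgebra.ι ℚ i * x)) =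
              sgn (pb i * (pb i + lpar l)) • ((1 ⊗ₜ[ℚ] (E.symm x)) ⊗ₜ[ℚ] b i)
              + TL (LinearMap.mulLeft ℚ (TensorAlgebra.ι ℚ (b i))) (TM (SFA pb ⇑b x)))
            ?_ ?_ ?_ ?_ hxmem
          · rintro x' ⟨w, hw, rfl⟩
            rw [← mono_cons, SFA_cons, map_add, map_smul]
            congr 1
            · rw [hw, hTM, TensorProduct.map_tmul, TensorProduct.map_tmul, LinearMap.id_apply]
              rw [hEℓ]
              simp only [AlgEquiv.toLinearMap_apply, map_one]
            · rw [hTM, hEℓ]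
              have hc := comm3 E.symm (FreeAlgebra.ι ℚ i) (SFA pb ⇑b (mono w))
              rw [TensorAlgebra.equivFreeAlgebra_symm_ι] at hc
              exact hc
          · simp [TL, mul_zero]
          · intro x₁ x₂ _ _ h1 h2
            rw [mul_add, map_add, map_add, h1, h2, map_add, map_add, map_add,
              TensorProduct.tmul_add, TensorProduct.add_tmul, smul_add, map_add]
            abel
          · intro c x' _ h
            rw [mul_smul_comm, map_smul, map_smul, h, smul_add, map_smul, map_smul,
              TensorProduct.tmul_smul, ← TensorProduct.smul_tmul', smul_comm c]
            rw [map_smul, map_smul]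
        have hmain := Q (E (pil l)) hx
        rw [AlgEquiv.symm_apply_apply] at hmain
        have hSt : ∀ t : TA M, St b pb t = TM (SFA pb ⇑b (E t)) := fun _ => rfl
        have e1 : E (TensorAlgebra.ι ℚ (b i) * pil l) = FreeAlgebra.ι ℚ i * E (pil l) := by
          rw [map_mul, TensorAlgebra.equivFreeAlgebra_ι_apply]
        calc St b pb (TensorAlgebra.ι ℚ (b i) * pil l)
            = TM (SFA pb ⇑b (E (TensorAlgebra.ι ℚ (b i) * pil l))) := hSt _
          _ = TM (SFA pb ⇑b (FreeAlgebra.ι ℚ i * E (pil l))) := by rw [e1]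
          _ = sgn (pb i * (pb i + lpar l)) • ((1 ⊗ₜ[ℚ] pil l) ⊗ₜ[ℚ] b i)
              + TL (LinearMap.mulLeft ℚ (TensorAlgebra.ι ℚ (b i))) (TM (SFA pb ⇑b (E (pil l)))) :=
              hmain
          _ = sgn (z * (z + lpar l)) • ((1 ⊗ₜ[ℚ] pil l) ⊗ₜ[ℚ] b i)
              + TL (LinearMap.mulLeft ℚ (TensorAlgebra.ι ℚ (b i))) (Phi l) := by
              rw [hiz, ← hSt, IH]
      -- outer span induction over m
      have hm : m ∈ G z := hl (m, z) List.mem_cons_self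
      have hsp := mem_span_parity G hdisj b pb hb z hm
      have outer : ∀ m' ∈ Submodule.span ℚ {x | ∃ i, pb i = z ∧ x = b i},
          St b pb (TensorAlgebra.ι ℚ m' * pil l) =
            sgn (z * (z + lpar l)) • ((1 ⊗ₜ[ℚ] pil l) ⊗ₜ[ℚ] m')
            + TL (LinearMap.mulLeft ℚ (TensorAlgebra.ι ℚ m')) (Phi l) := by
        intro m' hm'
        refine Submodule.span_induction (p := fun m' _ =>
            St b pb (TensorAlgebra.ι ℚ m' * pil l) =
              sgn (z * (z + lpar l)) • ((1 ⊗ₜ[ℚ] pil l) ⊗ₜ[ℚ] m')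
              + TL (LinearMap.mulLeft ℚ (TensorAlgebra.ι ℚ m')) (Phi l))
          ?_ ?_ ?_ ?_ hm'
        · rintro x' ⟨i, hi, rfl⟩
          exact inner i hi
        · beta_reduce
          rw [map_zero, zero_mul, map_zero, TensorProduct.tmul_zero, smul_zero,
            LinearMap.mulLeft_zero_eq_zero, TL_zero]
          simp
        · intro x₁ x₂ _ _ h1 h2
          beta_reduce
          rw [map_add, add_mul, map_add, h1, h2, TensorProduct.tmul_add, smul_add,
            mulLeft_add', TL_add]
          rw [LinearMap.add_apply]
          abel
        · intro c x' _ h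
          beta_reduce
          rw [map_smul, smul_mul_assoc, map_smul, h, TensorProduct.tmul_smul,
            mulLeft_smul', TL_smul]
          rw [LinearMap.smul_apply, smul_add, smul_comm]
      have hfin := outer m hsp
      rw [pil_cons, Phi_cons]
      exact hfin
end Main

section Final
open TensorProduct
variable {n : ℕ} {M : Type} [AddCommGroup M] [Module ℚ M]

lemma symm_mono (b : Module.Basis (Fin n) ℚ M) (pb : Fin n → ZMod 2) (w : List (Fin n)) :
    (TensorAlgebra.equivFreeAlgebra b).symm (mono w) = pil (w.map fun i => (b i, pb i)) := by
  induction w with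
  | nil => rw [mono_nil, map_one, List.map_nil, pil_nil]
  | cons i w ih =>
      rw [mono_cons, map_mul, TensorAlgebra.equivFreeAlgebra_symm_ι, List.map_cons, pil_cons, ih]

lemma St_eq (G : ZMod 2 → Submodule ℚ M) (hdisj : G 0 ⊓ G 1 = ⊥)
    (b b' : Module.Basis (Fin n) ℚ M) (pb pb' : Fin n → ZMod 2)
    (hb : ∀ i, b i ∈ G (pb i)) (hb' : ∀ i, b' i ∈ G (pb' i)) :
    St b pb = St b' pb' := by
  set E := TensorAlgebra.equivFreeAlgebra b with hE
  have key : (St b pb) ∘ₗ E.symm.toLinearMap = (St b' pb') ∘ₗ E.symm.toLinearMap := by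
    apply Module.Basis.ext (bas n)
    intro w
    simp only [LinearMap.comp_apply, AlgEquiv.toLinearMap_apply]
    rw [bas_eq_mono, symm_mono b pb]
    have hhom : ∀ q ∈ ((FreeMonoid.toList w).map fun i => (b i, pb i)), q.1 ∈ G q.2 := by
      rintro q hq
      rw [List.mem_map] at hq
      obtain ⟨i, _, rfl⟩ := hq
      exact hb i
    rw [St_pil G hdisj b pb hb _ hhom, St_pil G hdisj b' pb' hb' _ hhom]
  apply LinearMap.ext
  intro t
  have h1 : St b pb (E.symm (E t)) = St b' pb' (E.symm (E t)) := by
    have := LinearMap.congr_fun key (E t)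
    simpa using this
  rwa [AlgEquiv.symm_apply_apply] at h1

end Final

theorem divergence_is_basis_independent
    (M : Type) [AddCommGroup M] [Module ℚ M]
    (G : ZMod 2 → Submodule ℚ M) (hdisj : G 0 ⊓ G 1 = ⊥)
    (n : ℕ) (b b' : Module.Basis (Fin n) ℚ M) (pb pb' : Fin n → ZMod 2)
    (hb : ∀ i, b i ∈ G (pb i)) (hb' : ∀ i, b' i ∈ G (pb' i))
    (u : M →ₗ[ℚ] TensorAlgebra ℚ M) :
    ∀ (e e' : TensorAlgebra ℚ M ≃ₐ[ℚ] FA n),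
      e = TensorAlgebra.equivFreeAlgebra b →
      e' = TensorAlgebra.equivFreeAlgebra b' →
      (TensorProduct.map (CM M G).mkQ (CM M G).mkQ)
          ((TensorProduct.map e.symm.toLinearMap e.symm.toLinearMap)
            (divg pb (fun i => e (u (b i)))))
        = (TensorProduct.map (CM M G).mkQ (CM M G).mkQ)
            ((TensorProduct.map e'.symm.toLinearMap e'.symm.toLinearMap)
              (divg pb' (fun i => e' (u (b' i))))) := by
  intro e e' he he'
  subst he he'
  set E := TensorAlgebra.equivFreeAlgebra b with hE
  set E' := TensorAlgebra.equivFreeAlgebra b' with hE'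
  have hside : ∀ (bb : Module.Basis (Fin n) ℚ M) (pp : Fin n → ZMod 2),
      (TensorProduct.map (TensorAlgebra.equivFreeAlgebra bb).symm.toLinearMap
        (TensorAlgebra.equivFreeAlgebra bb).symm.toLinearMap)
        (divg pp (fun i => (TensorAlgebra.equivFreeAlgebra bb) (u (bb i))))
      = ∑ i, ctr (bb.coord i) ((St bb pp ∘ₗ u) (bb i)) := by
    intro bb pp
    rw [divg_eq pp bb, map_sum]
    refine Finset.sum_congr rfl (fun i _ => ?_)
    rw [← LinearMap.comp_apply, ctr_natural, LinearMap.comp_apply]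
    rfl
  have hpre :
      (TensorProduct.map E.symm.toLinearMap E.symm.toLinearMap)
        (divg pb (fun i => E (u (b i))))
      = (TensorProduct.map E'.symm.toLinearMap E'.symm.toLinearMap)
        (divg pb' (fun i => E' (u (b' i)))) := by
    rw [hE, hE', hside b pb, hside b' pb', trace_indep b b' (St b pb ∘ₗ u),
      St_eq G hdisj b b' pb pb' hb hb']
  exact congrArg _ hpre

end
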